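/- arXiv:1509.05196 — 2 statements merged into one kernel-verified Lean document; each statement's English description precedes it below -/
import Mathlib

section
/- (Proposition 1) Under Assumptions 1 and 2, let x : [t_k, t_{k+1}] → ℝⁿ be a solution of the continuous dynamics ẋ(t) = −[∇ₓₓ f(x(t);t)]⁻¹ ∇_{tx} f(x(t);t) with initial condition x(t_k) = x_k, and let x_{k+1|k} = x_k − h·[∇ₓₓ f(x_k;t_k)]⁻¹ ∇_{tx} f(x_k;t_k) be the forward-Euler step. Then the local truncation error Δ_k := x_{k+1|k} − x(t_{k+1}) satisfies ‖Δ_k‖ ≤ (h²/2)·[C₀²C₁/m³ + 2C₀C₂/m² + C₃/m]. -/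
noncomputable section

/-- The setting of a time-varying, smooth, strongly convex optimization problem
`min_{x ∈ ℝⁿ} f(x;t)`, bundling the objective `f`, its derivatives, the Hessian
inverse, the optimal trajectory `x*(t)`, and Assumptions 1 and 2 of the paper. -/
structure TVOpt (n : ℕ) where
  /-- the objective `f(x;t)` -/
  f : EuclideanSpace ℝ (Fin n) → ℝ → ℝ
  /-- the gradient `∇ₓ f(x;t)` -/
  grad : EuclideanSpace ℝ (Fin n) → ℝ → EuclideanSpace ℝ (Fin n)
  /-- the Hessian `∇ₓₓ f(x;t)` -/
  hess : EuclideanSpace ℝ (Fin n) → ℝ →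
    EuclideanSpace ℝ (Fin n) →L[ℝ] EuclideanSpace ℝ (Fin n)
  /-- the Hessian inverse `[∇ₓₓ f(x;t)]⁻¹` -/
  hessInv : EuclideanSpace ℝ (Fin n) → ℝ →
    EuclideanSpace ℝ (Fin n) →L[ℝ] EuclideanSpace ℝ (Fin n)
  /-- the mixed partial derivative `∇_{tx} f(x;t)` -/
  dtgrad : EuclideanSpace ℝ (Fin n) → ℝ → EuclideanSpace ℝ (Fin n)
  /-- the third derivative tensor `∇ₓₓₓ f(x;t)` -/
  d3 : EuclideanSpace ℝ (Fin n) → ℝ →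
    EuclideanSpace ℝ (Fin n) →L[ℝ] EuclideanSpace ℝ (Fin n) →L[ℝ] EuclideanSpace ℝ (Fin n)
  /-- the time derivative of the Hessian `∇_{xtx} f(x;t)` -/
  dthess : EuclideanSpace ℝ (Fin n) → ℝ →
    EuclideanSpace ℝ (Fin n) →L[ℝ] EuclideanSpace ℝ (Fin n)
  /-- the second time derivative of the gradient `∇_{ttx} f(x;t)` -/
  dttgrad : EuclideanSpace ℝ (Fin n) → ℝ → EuclideanSpace ℝ (Fin n)
  /-- the optimal trajectory `x*(t)` -/
  xstar : ℝ → EuclideanSpace ℝ (Fin n)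
  /-- strong convexity constant -/
  m : ℝ
  /-- Hessian norm bound (gradient Lipschitz constant) -/
  L : ℝ
  C0 : ℝ
  C1 : ℝ
  C2 : ℝ
  C3 : ℝ
  m_pos : 0 < m
  grad_spec : ∀ (x : EuclideanSpace ℝ (Fin n)) (t : ℝ), HasGradientAt (fun y => f y t) (grad x t) x
  hess_spec : ∀ (x : EuclideanSpace ℝ (Fin n)) (t : ℝ), HasFDerivAt (fun y => grad y t) (hess x t) x
  dtgrad_spec : ∀ (x : EuclideanSpace ℝ (Fin n)) (t : ℝ), HasDerivAt (fun s => grad x s) (dtgrad x t) t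
  d3_spec : ∀ (x : EuclideanSpace ℝ (Fin n)) (t : ℝ), HasFDerivAt (fun y => hess y t) (d3 x t) x
  dthess_spec : ∀ (x : EuclideanSpace ℝ (Fin n)) (t : ℝ), HasDerivAt (fun s => hess x s) (dthess x t) t
  dttgrad_spec : ∀ (x : EuclideanSpace ℝ (Fin n)) (t : ℝ), HasDerivAt (fun s => dtgrad x s) (dttgrad x t) t
  /-- Assumption 1: `∇ₓₓ f(x;t) ⪰ m·I` uniformly in `x` and `t`. -/
  strong_convex : ∀ (x : EuclideanSpace ℝ (Fin n)) (t : ℝ) (v : EuclideanSpace ℝ (Fin n)),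
    m * ‖v‖ ^ 2 ≤ @inner ℝ _ _ v (hess x t v)
  hessInv_left : ∀ (x : EuclideanSpace ℝ (Fin n)) (t : ℝ), ContinuousLinearMap.comp (hessInv x t) (hess x t) =
    ContinuousLinearMap.id ℝ (EuclideanSpace ℝ (Fin n))
  hessInv_right : ∀ (x : EuclideanSpace ℝ (Fin n)) (t : ℝ), ContinuousLinearMap.comp (hess x t) (hessInv x t) =
    ContinuousLinearMap.id ℝ (EuclideanSpace ℝ (Fin n))
  /-- Assumption 2: bounded derivatives, uniformly in `x` and `t`. -/
  hess_bound : ∀ (x : EuclideanSpace ℝ (Fin n)) (t : ℝ), ‖hess x t‖ ≤ L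
  dtgrad_bound : ∀ (x : EuclideanSpace ℝ (Fin n)) (t : ℝ), ‖dtgrad x t‖ ≤ C0
  d3_bound : ∀ (x : EuclideanSpace ℝ (Fin n)) (t : ℝ), ‖d3 x t‖ ≤ C1
  dthess_bound : ∀ (x : EuclideanSpace ℝ (Fin n)) (t : ℝ), ‖dthess x t‖ ≤ C2
  dttgrad_bound : ∀ (x : EuclideanSpace ℝ (Fin n)) (t : ℝ), ‖dttgrad x t‖ ≤ C3
  /-- `x*(t)` minimizes `f(·;t)` -/
  xstar_min : ∀ t : ℝ, IsMinOn (fun x => f x t) Set.univ (xstar t)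
  /-- equivalently, `∇ₓ f(x*(t);t) = 0` -/
  xstar_grad : ∀ t : ℝ, grad (xstar t) t = 0


open Set

namespace TVOpt

variable {n : ℕ} (P : TVOpt n)

lemma C0_nonneg : 0 ≤ P.C0 := le_trans (norm_nonneg _) (P.dtgrad_bound 0 0)
lemma C1_nonneg : 0 ≤ P.C1 := le_trans (norm_nonneg (P.d3 0 0)) (P.d3_bound 0 0)
lemma C2_nonneg : 0 ≤ P.C2 := le_trans (norm_nonneg (P.dthess 0 0)) (P.dthess_bound 0 0)
lemma C3_nonneg : 0 ≤ P.C3 := le_trans (norm_nonneg _) (P.dttgrad_bound 0 0)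

lemma div_mono_num {a b c : ℝ} (hab : a ≤ b) (hc : 0 < c) : a / c ≤ b / c := by
  rw [div_le_div_iff₀ hc hc]; nlinarith

/-- The Hessian inverse has norm at most `1/m`, applied form. -/
lemma hessInv_apply_norm_le (x : EuclideanSpace ℝ (Fin n)) (t : ℝ)
    (w : EuclideanSpace ℝ (Fin n)) : ‖P.hessInv x t w‖ ≤ ‖w‖ / P.m := by
  set v := P.hessInv x t w with hv
  have hHv : P.hess x t v = w := by
    have := congrArg (fun (T : EuclideanSpace ℝ (Fin n) →L[ℝ] EuclideanSpace ℝ (Fin n)) => T w)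
      (P.hessInv_right x t)
    simpa [hv] using this
  have h1 : P.m * ‖v‖ ^ 2 ≤ inner ℝ v w := by
    have := P.strong_convex x t v
    rwa [hHv] at this
  have h2 : (inner ℝ v w : ℝ) ≤ ‖v‖ * ‖w‖ := real_inner_le_norm v w
  rw [le_div_iff₀ P.m_pos]
  rcases eq_or_lt_of_le (norm_nonneg v) with h0 | h0
  · rw [← h0]; simp [norm_nonneg]
  · nlinarith
 
/-- `hess` is `C1`-Lipschitz in `x`. -/
lemma hess_lip_x (t : ℝ) (y y' : EuclideanSpace ℝ (Fin n)) :
    ‖P.hess y t - P.hess y' t‖ ≤ P.C1 * ‖y - y'‖ :=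
  convex_univ.norm_image_sub_le_of_norm_hasFDerivWithin_le
    (fun z _ => (P.d3_spec z t).hasFDerivWithinAt) (fun z _ => P.d3_bound z t)
    (mem_univ y') (mem_univ y)

/-- `hess` is `C2`-Lipschitz in `t`. -/
lemma hess_lip_t (x : EuclideanSpace ℝ (Fin n)) (s t : ℝ) :
    ‖P.hess x s - P.hess x t‖ ≤ P.C2 * ‖s - t‖ :=
  convex_univ.norm_image_sub_le_of_norm_hasDerivWithin_le
    (fun u _ => (P.dthess_spec x u).hasDerivWithinAt) (fun u _ => P.dthess_bound x u)
    (mem_univ t) (mem_univ s)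

/-- `dtgrad` is `C3`-Lipschitz in `t`. -/
lemma dtgrad_lip_t (x : EuclideanSpace ℝ (Fin n)) (s t : ℝ) :
    ‖P.dtgrad x s - P.dtgrad x t‖ ≤ P.C3 * ‖s - t‖ :=
  convex_univ.norm_image_sub_le_of_norm_hasDerivWithin_le
    (fun u _ => (P.dttgrad_spec x u).hasDerivWithinAt) (fun u _ => P.dttgrad_bound x u)
    (mem_univ t) (mem_univ s)

/-- `dtgrad` is `C2`-Lipschitz in `x` (a consequence of symmetry of mixed partials,
proved here without Clairaut, via a converse mean value inequality). -/
lemma dtgrad_lip_x (t : ℝ) (y y' : EuclideanSpace ℝ (Fin n)) :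
    ‖P.dtgrad y t - P.dtgrad y' t‖ ≤ P.C2 * ‖y - y'‖ := by
  set ψ : ℝ → EuclideanSpace ℝ (Fin n) := fun s => P.grad y s - P.grad y' s with hψdef
  set v : EuclideanSpace ℝ (Fin n) := P.dtgrad y t - P.dtgrad y' t with hvdef
  have hψ : HasFDerivAt ψ (ContinuousLinearMap.smulRight (1 : ℝ →L[ℝ] ℝ) v) t :=
    ((P.dtgrad_spec y t).sub (P.dtgrad_spec y' t)).hasFDerivAt
  have hlip : ∀ s : ℝ, ‖ψ s - ψ t‖ ≤ (P.C2 * ‖y - y'‖) * ‖s - t‖ := by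
    intro s
    have key : ‖(P.grad y s - P.grad y t) - (P.grad y' s - P.grad y' t)‖ ≤
        (P.C2 * ‖s - t‖) * ‖y - y'‖ :=
      convex_univ.norm_image_sub_le_of_norm_hasFDerivWithin_le
        (f := fun z => P.grad z s - P.grad z t) (f' := fun z => P.hess z s - P.hess z t)
        (fun z _ => ((P.hess_spec z s).sub (P.hess_spec z t)).hasFDerivWithinAt)
        (fun z _ => P.hess_lip_t z s t) (mem_univ y') (mem_univ y)
    have heq : ψ s - ψ t = (P.grad y s - P.grad y t) - (P.grad y' s - P.grad y' t) := by
      show (P.grad y s - P.grad y' s) - (P.grad y t - P.grad y' t) = _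
      abel
    rw [heq]
    calc ‖(P.grad y s - P.grad y t) - (P.grad y' s - P.grad y' t)‖
        ≤ (P.C2 * ‖s - t‖) * ‖y - y'‖ := key
      _ = (P.C2 * ‖y - y'‖) * ‖s - t‖ := by ring
  have hC : (0:ℝ) ≤ P.C2 * ‖y - y'‖ := mul_nonneg P.C2_nonneg (norm_nonneg _)
  have hD := hψ.le_of_lip' hC (Filter.Eventually.of_forall hlip)
  calc ‖v‖ = ‖(ContinuousLinearMap.smulRight (1 : ℝ →L[ℝ] ℝ) v) 1‖ := by simp
    _ ≤ ‖ContinuousLinearMap.smulRight (1 : ℝ →L[ℝ] ℝ) v‖ * ‖(1:ℝ)‖ :=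
        ContinuousLinearMap.le_opNorm _ 1
    _ ≤ P.C2 * ‖y - y'‖ := by simpa using hD

end TVOpt

set_option maxHeartbeats 1000000 in
/-- **Proposition 1.** The local truncation error of the forward-Euler
prediction step, relative to the exact continuous dynamics
`ẋ = −[∇ₓₓ f(x;t)]⁻¹ ∇_tx f(x;t)` started from the same initial condition, is bounded
by `(h²/2)·[C₀²C₁/m³ + 2C₀C₂/m² + C₃/m]`. -/
theorem euler_truncation_error (n : ℕ) (P : TVOpt n) (h : ℝ) (hh : 0 < h) (k : ℕ)
    (x : ℝ → EuclideanSpace ℝ (Fin n)) (xk : EuclideanSpace ℝ (Fin n))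
    (hinit : x ((k : ℝ) * h) = xk)
    (hode : ∀ t ∈ Set.Icc ((k : ℝ) * h) (((k : ℝ) + 1) * h),
      HasDerivAt x (-(P.hessInv (x t) t (P.dtgrad (x t) t))) t) :
    ‖(xk - h • P.hessInv xk ((k : ℝ) * h) (P.dtgrad xk ((k : ℝ) * h)))
        - x (((k : ℝ) + 1) * h)‖ ≤
      h ^ 2 / 2 * (P.C0 ^ 2 * P.C1 / P.m ^ 3 + 2 * P.C0 * P.C2 / P.m ^ 2 + P.C3 / P.m) := by
  set a : ℝ := (k : ℝ) * h with ha_def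
  set b : ℝ := ((k : ℝ) + 1) * h with hb_def
  have hba : b - a = h := by rw [ha_def, hb_def]; ring
  have hab : a ≤ b := by nlinarith
  set m := P.m with hm
  have hm0 : 0 < P.m := P.m_pos
  set M : ℝ := P.C0 ^ 2 * P.C1 / P.m ^ 3 + 2 * P.C0 * P.C2 / P.m ^ 2 + P.C3 / P.m with hM
  set g : ℝ → EuclideanSpace ℝ (Fin n) :=
    fun t => -(P.hessInv (x t) t (P.dtgrad (x t) t)) with hg
  have hode' : ∀ t ∈ Icc a b, HasDerivAt x (g t) t := hode
  -- velocity bound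
  have hvel : ∀ t : ℝ, ‖g t‖ ≤ P.C0 / P.m := by
    intro t
    have h1 : ‖g t‖ ≤ ‖P.dtgrad (x t) t‖ / P.m := by
      show ‖-(P.hessInv (x t) t (P.dtgrad (x t) t))‖ ≤ _
      rw [norm_neg]
      exact P.hessInv_apply_norm_le (x t) t (P.dtgrad (x t) t)
    exact h1.trans (TVOpt.div_mono_num (P.dtgrad_bound (x t) t) hm0)
  -- trajectory displacement bound
  have hdisp : ∀ t ∈ Icc a b, ‖x t - x a‖ ≤ (P.C0 / P.m) * (t - a) := by
    intro t ht
    exact norm_image_sub_le_of_norm_deriv_right_le_segment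
      (fun s hs => (hode' s hs).continuousAt.continuousWithinAt)
      (fun s hs => (hode' s (Ico_subset_Icc_self hs)).hasDerivWithinAt)
      (fun s _ => hvel s) t ht
  -- key Lipschitz bound on the velocity along the trajectory
  have key : ∀ t ∈ Icc a b, ‖g a - g t‖ ≤ M * (t - a) := by
    intro t ht
    have hta : 0 ≤ t - a := sub_nonneg.mpr ht.1
    set ut := P.dtgrad (x t) t with hut
    set ua := P.dtgrad (x a) a with hua
    set Ht := P.hess (x t) t with hHt
    set Ha := P.hess (x a) a with hHa
    set w := P.hessInv (x a) a ua with hw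
    have hHaw : Ha w = ua := by
      have := congrArg
        (fun (T : EuclideanSpace ℝ (Fin n) →L[ℝ] EuclideanSpace ℝ (Fin n)) => T ua)
        (P.hessInv_right (x a) a)
      simpa [hw, hHa] using this
    have hHtw : P.hessInv (x t) t (Ht w) = w := by
      have := congrArg
        (fun (T : EuclideanSpace ℝ (Fin n) →L[ℝ] EuclideanSpace ℝ (Fin n)) => T w)
        (P.hessInv_left (x t) t)
      simpa [hHt] using this
    have hdec : g a - g t =
        P.hessInv (x t) t (ut - ua) + P.hessInv (x t) t ((Ha - Ht) w) := by
      have : P.hessInv (x t) t (ut - ua) + P.hessInv (x t) t ((Ha - Ht) w)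
          = P.hessInv (x t) t ut - P.hessInv (x t) t ua
            + (P.hessInv (x t) t (Ha w) - P.hessInv (x t) t (Ht w)) := by
        simp [map_sub, ContinuousLinearMap.sub_apply]
      have hga : g a = -w := rfl
      have hgt : g t = -(P.hessInv (x t) t ut) := rfl
      rw [this, hHaw, hHtw, hga, hgt]
      abel
    -- norm bounds
    have hxta : ‖x t - x a‖ ≤ (P.C0 / P.m) * (t - a) := hdisp t ht
    have hdu : ‖ut - ua‖ ≤ (P.C2 * (P.C0 / P.m) + P.C3) * (t - a) := by
      have h1 : ‖ut - P.dtgrad (x a) t‖ ≤ P.C2 * ‖x t - x a‖ := P.dtgrad_lip_x t (x t) (x a)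
      have h2 : ‖P.dtgrad (x a) t - ua‖ ≤ P.C3 * ‖t - a‖ := P.dtgrad_lip_t (x a) t a
      have h3 : ‖ut - ua‖ ≤ ‖ut - P.dtgrad (x a) t‖ + ‖P.dtgrad (x a) t - ua‖ :=
        norm_sub_le_norm_sub_add_norm_sub _ _ _
      have h4 : ‖t - a‖ = t - a := by rw [Real.norm_eq_abs, abs_of_nonneg hta]
      rw [h4] at h2
      have h5 : P.C2 * ‖x t - x a‖ ≤ P.C2 * ((P.C0 / P.m) * (t - a)) :=
        mul_le_mul_of_nonneg_left hxta P.C2_nonneg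
      linarith
    have hdH : ‖Ha - Ht‖ ≤ (P.C1 * (P.C0 / P.m) + P.C2) * (t - a) := by
      have h1 : ‖Ha - P.hess (x a) t‖ ≤ P.C2 * ‖a - t‖ := P.hess_lip_t (x a) a t
      have h2 : ‖P.hess (x a) t - Ht‖ ≤ P.C1 * ‖x a - x t‖ := P.hess_lip_x t (x a) (x t)
      have h3 : ‖Ha - Ht‖ ≤ ‖Ha - P.hess (x a) t‖ + ‖P.hess (x a) t - Ht‖ :=
        norm_sub_le_norm_sub_add_norm_sub _ _ _
      have h4 : ‖a - t‖ = t - a := by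
        rw [Real.norm_eq_abs, abs_sub_comm, abs_of_nonneg hta]
      have h5 : ‖x a - x t‖ = ‖x t - x a‖ := norm_sub_rev _ _
      rw [h4] at h1; rw [h5] at h2
      have h6 : P.C1 * ‖x t - x a‖ ≤ P.C1 * ((P.C0 / P.m) * (t - a)) :=
        mul_le_mul_of_nonneg_left hxta P.C1_nonneg
      linarith
    have hwn : ‖w‖ ≤ P.C0 / P.m := by
      refine (P.hessInv_apply_norm_le (x a) a ua).trans ?_
      exact TVOpt.div_mono_num (P.dtgrad_bound (x a) a) hm0
    have hC0m : (0:ℝ) ≤ P.C0 / P.m := div_nonneg P.C0_nonneg hm0.le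
    have hb1 : ‖P.hessInv (x t) t (ut - ua)‖ ≤ ((P.C2 * (P.C0 / P.m) + P.C3) * (t - a)) / P.m := by
      refine (P.hessInv_apply_norm_le (x t) t _).trans ?_
      exact TVOpt.div_mono_num hdu hm0
    have hb2 : ‖P.hessInv (x t) t ((Ha - Ht) w)‖ ≤
        (((P.C1 * (P.C0 / P.m) + P.C2) * (t - a)) * (P.C0 / P.m)) / P.m := by
      refine (P.hessInv_apply_norm_le (x t) t _).trans ?_
      have hAw : ‖(Ha - Ht) w‖ ≤ ((P.C1 * (P.C0 / P.m) + P.C2) * (t - a)) * (P.C0 / P.m) := by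
        refine ((Ha - Ht).le_opNorm w).trans ?_
        exact mul_le_mul hdH hwn (norm_nonneg _)
          (mul_nonneg (add_nonneg (mul_nonneg P.C1_nonneg hC0m) P.C2_nonneg) hta)
      exact TVOpt.div_mono_num hAw hm0
    have heq : ((P.C2 * (P.C0 / P.m) + P.C3) * (t - a)) / P.m
        + (((P.C1 * (P.C0 / P.m) + P.C2) * (t - a)) * (P.C0 / P.m)) / P.m = M * (t - a) := by
      rw [hM]; field_simp; ring
    calc ‖g a - g t‖
        ≤ ‖P.hessInv (x t) t (ut - ua)‖ + ‖P.hessInv (x t) t ((Ha - Ht) w)‖ := by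
          rw [hdec]; exact norm_add_le _ _
      _ ≤ ((P.C2 * (P.C0 / P.m) + P.C3) * (t - a)) / P.m
          + (((P.C1 * (P.C0 / P.m) + P.C2) * (t - a)) * (P.C0 / P.m)) / P.m :=
          add_le_add hb1 hb2
      _ = M * (t - a) := heq
  -- the fencing argument
  set e : ℝ → EuclideanSpace ℝ (Fin n) := fun t => x a + (t - a) • g a - x t with he_def
  have he' : ∀ t ∈ Icc a b, HasDerivAt e (g a - g t) t := by
    intro t ht
    have h1 : HasDerivAt (fun s : ℝ => x a + (s - a) • g a) ((1:ℝ) • g a) t :=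
      (((hasDerivAt_id t).sub_const a).smul_const (g a)).const_add (x a)
    have h2 := h1.sub (hode' t ht)
    have h3 : HasDerivAt (fun s : ℝ => x a + (s - a) • g a - x s) (g a - g t) t := by
      simp only [one_smul] at h2; exact h2
    exact h3
  have hB : ∀ t : ℝ, HasDerivAt (fun t => M / 2 * (t - a) ^ 2) (M * (t - a)) t := by
    intro t
    have := (((hasDerivAt_id t).sub_const a).pow 2).const_mul (M / 2)
    refine this.congr_deriv ?_
    simp only [id_eq]
    push_cast
    ring
  have hea : ‖e a‖ ≤ M / 2 * (a - a) ^ 2 := by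
    have h0 : e a = 0 := by
      show x a + (a - a) • g a - x a = 0
      simp
    rw [h0]
    simp
  have hmain : ‖e b‖ ≤ M / 2 * (b - a) ^ 2 := by
    refine image_norm_le_of_norm_deriv_right_le_deriv_boundary
      (f := e) (f' := fun t => g a - g t) (a := a) (b := b)
      (fun t ht => (he' t ht).continuousAt.continuousWithinAt)
      (fun t ht => (he' t (Ico_subset_Icc_self ht)).hasDerivWithinAt)
      hea hB (fun t ht => key t (Ico_subset_Icc_self ht)) (right_mem_Icc.mpr hab)
  have hfinal : e b = (xk - h • P.hessInv xk ((k : ℝ) * h) (P.dtgrad xk ((k : ℝ) * h)))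
      - x (((k : ℝ) + 1) * h) := by
    show x a + (b - a) • -(P.hessInv (x a) a (P.dtgrad (x a) a)) - x b = _
    rw [hba, hinit, smul_neg]
    abel
  rw [← hfinal]
  calc ‖e b‖ ≤ M / 2 * (b - a) ^ 2 := hmain
    _ = h ^ 2 / 2 * M := by rw [hba]; ring
end
end

section
/- (Theorem 1, part i) Under Assumptions 1 and 2, let the GTT stepsize satisfy 0 < γ < 2/L, so that ρ := max{|1−γm|, |1−γL|} < 1. Then for any sampling period h > 0, the GTT iterates satisfy, for every k ≥ 0: ‖x_k − x*(t_k)‖ ≤ ρ^{τk}·‖x₀ − x*(t₀)‖ + ρ^τ·[ h·(2C₀/m) + (h²/2)·(C₀²C₁/m³ + 2C₀C₂/m² + C₃/m) ]·(1 − ρ^{τk})/(1 − ρ^τ). -/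
noncomputable section

namespace GTTaux

local notation "⟪" x ", " y "⟫" => @inner ℝ _ _ x y

lemma selfadj_norm_bound {E : Type*} [NormedAddCommGroup E] [InnerProductSpace ℝ E]
    (A : E →L[ℝ] E) (hsym : ∀ v w : E, ⟪A v, w⟫ = ⟪A w, v⟫) {c : ℝ} (hc : 0 ≤ c)
    (hb : ∀ v : E, |⟪v, A v⟫| ≤ c * ‖v‖ ^ 2) (v : E) : ‖A v‖ ≤ c * ‖v‖ := by
  rcases eq_or_ne (A v) 0 with h0 | h0
  · rw [h0, norm_zero]; positivity
  have hv : v ≠ 0 := by rintro rfl; simp at h0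
  set w : E := (‖v‖ / ‖A v‖) • A v with hw
  have hAv : (0:ℝ) < ‖A v‖ := norm_pos_iff.mpr h0
  have hvn : (0:ℝ) < ‖v‖ := norm_pos_iff.mpr hv
  have hwn : ‖w‖ = ‖v‖ := by
    rw [hw, norm_smul, Real.norm_eq_abs, abs_div, abs_of_nonneg hvn.le,
      abs_of_nonneg hAv.le, div_mul_cancel₀ _ hAv.ne']
  have key : 4 * ⟪A v, w⟫ = ⟪v + w, A (v + w)⟫ - ⟪v - w, A (v - w)⟫ := by
    have h1 : ⟪v, A w⟫ = ⟪A v, w⟫ := by rw [real_inner_comm]; exact hsym w v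
    have h2 : ⟪w, A v⟫ = ⟪A v, w⟫ := real_inner_comm _ _
    simp only [map_add, map_sub, inner_add_left, inner_add_right, inner_sub_left,
      inner_sub_right]
    linarith
  have hIvw : ⟪A v, w⟫ = ‖v‖ * ‖A v‖ := by
    rw [hw, real_inner_smul_right, real_inner_self_eq_norm_sq]
    field_simp
  have hpar : ‖v + w‖ ^ 2 + ‖v - w‖ ^ 2 = 2 * ‖v‖ ^ 2 + 2 * ‖w‖ ^ 2 := by
    have := norm_add_sq_real v w
    have := norm_sub_sq_real v w
    linarith
  have b1 := hb (v + w)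
  have b2 := hb (v - w)
  have h3 : ⟪v + w, A (v + w)⟫ ≤ c * ‖v + w‖ ^ 2 := (abs_le.1 b1).2
  have h4 : -(c * ‖v - w‖ ^ 2) ≤ ⟪v - w, A (v - w)⟫ := (abs_le.1 b2).1
  have : 4 * (‖v‖ * ‖A v‖) ≤ 4 * (c * ‖v‖ ^ 2) := by
    rw [← hIvw]
    calc 4 * ⟪A v, w⟫ = ⟪v + w, A (v + w)⟫ - ⟪v - w, A (v - w)⟫ := key
    _ ≤ c * ‖v + w‖ ^ 2 + c * ‖v - w‖ ^ 2 := by linarith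
    _ = c * (2 * ‖v‖ ^ 2 + 2 * ‖w‖ ^ 2) := by rw [← hpar]; ring
    _ = 4 * (c * ‖v‖ ^ 2) := by rw [hwn]; ring
  have h5 : ‖v‖ * ‖A v‖ ≤ c * ‖v‖ ^ 2 := by linarith
  calc ‖A v‖ = (‖v‖ * ‖A v‖) / ‖v‖ := by field_simp
  _ ≤ (c * ‖v‖ ^ 2) / ‖v‖ := div_le_div_of_nonneg_right h5 hvn.le
  _ = c * ‖v‖ := by field_simp

variable {n : ℕ} (P : TVOpt n)

local notation "E" => EuclideanSpace ℝ (Fin n)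

lemma hess_symm (x : E) (t : ℝ) (v w : E) :
    ⟪P.hess x t v, w⟫ = ⟪P.hess x t w, v⟫ := by
  set D : E →L[ℝ] (E →L[ℝ] ℝ) :=
    (InnerProductSpace.toDual ℝ (EuclideanSpace ℝ (Fin n))).toContinuousLinearEquiv.toContinuousLinearMap
  have hf : ∀ y : E, HasFDerivAt (fun z => P.f z t)
      ((fun y : E => D (P.grad y t)) y) y := fun y => (P.grad_spec y t).hasFDerivAt
  have hx : HasFDerivAt (fun y : E => D (P.grad y t)) (D.comp (P.hess x t)) x :=
    D.hasFDerivAt.comp x (P.hess_spec x t)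
  have := second_derivative_symmetric hf hx v w
  simpa [D, InnerProductSpace.toDual_apply_apply] using this

lemma C0_nonneg : 0 ≤ P.C0 := le_trans (norm_nonneg _) (P.dtgrad_bound 0 0)
lemma C1_nonneg : 0 ≤ P.C1 := le_trans (norm_nonneg (P.d3 0 0)) (P.d3_bound 0 0)
lemma C2_nonneg : 0 ≤ P.C2 := le_trans (norm_nonneg _) (P.dthess_bound 0 0)
lemma C3_nonneg : 0 ≤ P.C3 := le_trans (norm_nonneg _) (P.dttgrad_bound 0 0)

lemma m_le_L (hn : 0 < n) : P.m ≤ P.L := by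
  set v : E := EuclideanSpace.single ⟨0, hn⟩ (1:ℝ)
  have hv : ‖v‖ = 1 := by simp [v, EuclideanSpace.norm_single]
  have h1 := P.strong_convex 0 0 v
  have h2 : ⟪v, P.hess 0 0 v⟫ ≤ ‖v‖ * ‖P.hess 0 0 v‖ := real_inner_le_norm _ _
  have h3 : ‖P.hess 0 0 v‖ ≤ ‖P.hess 0 0‖ * ‖v‖ := (P.hess 0 0).le_opNorm v
  have h4 := P.hess_bound 0 0
  rw [hv] at h1 h2 h3
  nlinarith [norm_nonneg (P.hess 0 0 v)]

lemma hess_inner_le (x : E) (t : ℝ) (v : E) : ⟪v, P.hess x t v⟫ ≤ P.L * ‖v‖ ^ 2 := by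
  have h2 : ⟪v, P.hess x t v⟫ ≤ ‖v‖ * ‖P.hess x t v‖ := real_inner_le_norm _ _
  have h3 : ‖P.hess x t v‖ ≤ ‖P.hess x t‖ * ‖v‖ := (P.hess x t).le_opNorm v
  have h4 := P.hess_bound x t
  nlinarith [norm_nonneg v, norm_nonneg (P.hess x t v), norm_nonneg (P.hess x t)]

lemma hessInv_bound (x : E) (t : ℝ) (w : E) : ‖P.hessInv x t w‖ ≤ ‖w‖ / P.m := by
  set v : E := P.hessInv x t w
  have hHv : P.hess x t v = w := by
    have := DFunLike.congr_fun (P.hessInv_right x t) w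
    simpa using this
  have h1 := P.strong_convex x t v
  have h2 : ⟪v, P.hess x t v⟫ ≤ ‖v‖ * ‖P.hess x t v‖ := real_inner_le_norm _ _
  rw [hHv] at h1 h2
  rcases eq_or_ne v 0 with h0 | h0
  · rw [h0, norm_zero]; exact div_nonneg (norm_nonneg w) P.m_pos.le
  have hv : (0:ℝ) < ‖v‖ := norm_pos_iff.mpr h0
  rw [le_div_iff₀ P.m_pos]
  nlinarith

/-- strong monotonicity of the gradient -/
lemma grad_mono (t : ℝ) (y z : E) :
    P.m * ‖y - z‖ ^ 2 ≤ ⟪P.grad y t - P.grad z t, y - z⟫ := by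
  set v : E := y - z with hv
  set g : ℝ → ℝ := fun θ => ⟪P.grad (z + θ • v) t, v⟫ - θ * (P.m * ‖v‖ ^ 2) with hg
  have hder : ∀ θ : ℝ, HasDerivAt g (⟪P.hess (z + θ • v) t v, v⟫ - P.m * ‖v‖ ^ 2) θ := by
    intro θ
    have hc : HasDerivAt (fun θ : ℝ => z + θ • v) v θ := by
      simpa using ((hasDerivAt_id θ).smul_const v).const_add z
    have hgr : HasDerivAt (fun θ : ℝ => P.grad (z + θ • v) t) (P.hess (z + θ • v) t v) θ :=
      by have := (P.hess_spec (z + θ • v) t).comp_hasDerivAt θ hc; exact this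
    have hinner : HasDerivAt (fun θ : ℝ => ⟪P.grad (z + θ • v) t, v⟫)
        (⟪P.hess (z + θ • v) t v, v⟫) θ := by
      have := hgr.inner ℝ (hasDerivAt_const θ v)
      simpa using this
    have := hinner.sub (hasDerivAt_mul_const (P.m * ‖v‖ ^ 2)); exact this
  have hmono : Monotone g := by
    apply monotone_of_deriv_nonneg (fun θ => (hder θ).differentiableAt)
    intro θ
    rw [(hder θ).deriv]
    have := P.strong_convex (z + θ • v) t v
    rw [real_inner_comm] at this
    linarith
  have h01 := hmono (zero_le_one)
  have hg0 : g 0 = ⟪P.grad z t, v⟫ := by simp [hg]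
  have hg1 : g 1 = ⟪P.grad y t, v⟫ - P.m * ‖v‖ ^ 2 := by
    simp [hg, hv]
  rw [hg0, hg1] at h01
  rw [inner_sub_left]
  linarith


/-- time-Lipschitzness of the gradient -/
lemma grad_time_lip (x : E) (s t : ℝ) :
    ‖P.grad x t - P.grad x s‖ ≤ P.C0 * ‖t - s‖ := by
  apply (convex_univ).norm_image_sub_le_of_norm_hasDerivWithin_le
    (f := fun r => P.grad x r) (f' := fun r => P.dtgrad x r)
    (fun r _ => (P.dtgrad_spec x r).hasDerivWithinAt)
    (fun r _ => P.dtgrad_bound x r) (Set.mem_univ s) (Set.mem_univ t)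

/-- Lipschitzness of the optimal trajectory -/
lemma xstar_lip (s t : ℝ) :
    ‖P.xstar t - P.xstar s‖ ≤ P.C0 / P.m * ‖t - s‖ := by
  set d : E := P.xstar t - P.xstar s with hd
  rcases eq_or_ne d 0 with h0 | h0
  · rw [h0, norm_zero]
    have := C0_nonneg P
    have := P.m_pos
    positivity
  have hdn : (0:ℝ) < ‖d‖ := norm_pos_iff.mpr h0
  have h1 := grad_mono P t (P.xstar t) (P.xstar s)
  rw [P.xstar_grad t, zero_sub, ← hd] at h1
  have h2 : ⟪-P.grad (P.xstar s) t, d⟫ = ⟪P.grad (P.xstar s) s - P.grad (P.xstar s) t, d⟫ := by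
    rw [P.xstar_grad s]; simp
  rw [h2] at h1
  have h3 : ⟪P.grad (P.xstar s) s - P.grad (P.xstar s) t, d⟫ ≤
      ‖P.grad (P.xstar s) s - P.grad (P.xstar s) t‖ * ‖d‖ := real_inner_le_norm _ _
  have h4 : ‖P.grad (P.xstar s) s - P.grad (P.xstar s) t‖ ≤ P.C0 * ‖s - t‖ :=
    grad_time_lip P _ _ _
  have h5 : ‖s - t‖ = ‖t - s‖ := norm_sub_rev s t
  rw [h5] at h4
  have h6 : P.m * ‖d‖ ^ 2 ≤ P.C0 * ‖t - s‖ * ‖d‖ := by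
    calc P.m * ‖d‖ ^ 2 ≤ ‖P.grad (P.xstar s) s - P.grad (P.xstar s) t‖ * ‖d‖ := le_trans h1 h3
    _ ≤ P.C0 * ‖t - s‖ * ‖d‖ := by
        apply mul_le_mul_of_nonneg_right h4 hdn.le
  rw [div_mul_eq_mul_div, le_div_iff₀ P.m_pos]
  nlinarith

/-- the operator norm bound for the gradient-descent step derivative -/
lemma step_deriv_bound (γ ρ : ℝ) (hρ : ρ = max |1 - γ * P.m| |1 - γ * P.L|)
    (x : E) (t : ℝ) :
    ‖ContinuousLinearMap.id ℝ (EuclideanSpace ℝ (Fin n)) - γ • P.hess x t‖ ≤ ρ := by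
  have hρ0 : 0 ≤ ρ := by rw [hρ]; exact le_trans (abs_nonneg _) (le_max_left _ _)
  set A : E →L[ℝ] E := ContinuousLinearMap.id ℝ (EuclideanSpace ℝ (Fin n)) - γ • P.hess x t with hA
  have hAapp : ∀ v : E, A v = v - γ • P.hess x t v := by intro v; simp [hA]
  apply ContinuousLinearMap.opNorm_le_bound _ hρ0
  intro v
  apply selfadj_norm_bound A _ hρ0 _ v
  · intro v w
    rw [hAapp, hAapp, inner_sub_left, inner_sub_left, real_inner_smul_left,
      real_inner_smul_left, hess_symm P x t v w, real_inner_comm v w]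
  · intro v
    have h1 := P.strong_convex x t v
    have h2 := hess_inner_le P x t v
    have h3 : ⟪v, A v⟫ = ‖v‖ ^ 2 - γ * ⟪v, P.hess x t v⟫ := by
      rw [hAapp, inner_sub_right, real_inner_smul_right, real_inner_self_eq_norm_sq]
    have h4 : |1 - γ * P.m| ≤ ρ := by rw [hρ]; exact le_max_left _ _
    have h5 : |1 - γ * P.L| ≤ ρ := by rw [hρ]; exact le_max_right _ _
    have h6 := le_abs_self (1 - γ * P.m)
    have h7 := neg_abs_le (1 - γ * P.L)
    rw [h3, abs_le]
    rcases le_or_gt 0 γ with hγ | hγ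
    · constructor
      · nlinarith [sq_nonneg ‖v‖]
      · nlinarith [sq_nonneg ‖v‖]
    · have h8 := le_abs_self (1 - γ * P.L)
      have h9 := neg_abs_le (1 - γ * P.m)
      constructor
      · nlinarith [sq_nonneg ‖v‖]
      · nlinarith [sq_nonneg ‖v‖]

/-- one gradient step is a `ρ`-contraction -/
lemma step_contract (γ ρ : ℝ) (hρ : ρ = max |1 - γ * P.m| |1 - γ * P.L|)
    (t : ℝ) (y z : E) :
    ‖(y - γ • P.grad y t) - (z - γ • P.grad z t)‖ ≤ ρ * ‖y - z‖ := by
  apply (convex_univ).norm_image_sub_le_of_norm_hasFDerivWithin_le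
    (f := fun u : EuclideanSpace ℝ (Fin n) => u - γ • P.grad u t)
    (f' := fun u => ContinuousLinearMap.id ℝ (EuclideanSpace ℝ (Fin n)) - γ • P.hess u t)
    (fun u _ => ((hasFDerivAt_id u).sub ((P.hess_spec u t).const_smul γ)).hasFDerivWithinAt)
    (fun u _ => step_deriv_bound P γ ρ hρ u t) (Set.mem_univ z) (Set.mem_univ y)

/-- τ gradient steps contract toward the minimizer -/
lemma iter_contract (γ ρ : ℝ) (hρ : ρ = max |1 - γ * P.m| |1 - γ * P.L|)
    (t : ℝ) (τ : ℕ) (y : E) :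
    ‖(fun u : EuclideanSpace ℝ (Fin n) => u - γ • P.grad u t)^[τ] y - P.xstar t‖ ≤
      ρ ^ τ * ‖y - P.xstar t‖ := by
  have hρ0 : 0 ≤ ρ := by rw [hρ]; exact le_trans (abs_nonneg _) (le_max_left _ _)
  induction τ with
  | zero => simp
  | succ k ih =>
    rw [Function.iterate_succ_apply']
    set u := (fun u : EuclideanSpace ℝ (Fin n) => u - γ • P.grad u t)^[k] y
    have hfix : P.xstar t = P.xstar t - γ • P.grad (P.xstar t) t := by
      rw [P.xstar_grad t]; simp
    calc ‖(u - γ • P.grad u t) - P.xstar t‖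
        = ‖(u - γ • P.grad u t) - (P.xstar t - γ • P.grad (P.xstar t) t)‖ := by rw [← hfix]
      _ ≤ ρ * ‖u - P.xstar t‖ := step_contract P γ ρ hρ t u (P.xstar t)
      _ ≤ ρ * (ρ ^ k * ‖y - P.xstar t‖) := mul_le_mul_of_nonneg_left ih hρ0
      _ = ρ ^ (k + 1) * ‖y - P.xstar t‖ := by ring

end GTTaux

/-- **Theorem 1, part i.** GTT with stepsize `0 < γ < 2/L` (so that
`ρ := max{|1−γm|,|1−γL|} < 1`) converges exponentially up to a bounded error, for
any sampling period `h > 0`. -/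
theorem gtt_convergence_any_period (n : ℕ) (hn : 0 < n) (P : TVOpt n) (h : ℝ) (hh : 0 < h)
    (γ : ℝ) (τ : ℕ) (hτ : 1 ≤ τ) (hγ0 : 0 < γ) (hγL : γ < 2 / P.L)
    (ρ : ℝ) (hρ : ρ = max |1 - γ * P.m| |1 - γ * P.L|)
    (x : ℕ → EuclideanSpace ℝ (Fin n))
    (hrec : ∀ k : ℕ, x (k + 1) =
      (fun y => y - γ • P.grad y (((k : ℝ) + 1) * h))^[τ]
        (x k - h • P.hessInv (x k) ((k : ℝ) * h) (P.dtgrad (x k) ((k : ℝ) * h)))) :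
    ρ < 1 ∧ ∀ k : ℕ,
      ‖x k - P.xstar ((k : ℝ) * h)‖ ≤
        ρ ^ (τ * k) * ‖x 0 - P.xstar 0‖ +
        ρ ^ τ * (h * (2 * P.C0 / P.m) +
            h ^ 2 / 2 * (P.C0 ^ 2 * P.C1 / P.m ^ 3 + 2 * P.C0 * P.C2 / P.m ^ 2 + P.C3 / P.m)) *
          ((1 - ρ ^ (τ * k)) / (1 - ρ ^ τ)) := by
  have hm := P.m_pos
  have hmL := GTTaux.m_le_L P hn
  have hL : 0 < P.L := lt_of_lt_of_le hm hmL
  have hγL2 : γ * P.L < 2 := by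
    have := (lt_div_iff₀ hL).mp hγL
    linarith
  have hγm2 : γ * P.m < 2 := by nlinarith
  have hρ0 : 0 ≤ ρ := by rw [hρ]; exact le_trans (abs_nonneg _) (le_max_left _ _)
  have hρ1 : ρ < 1 := by
    rw [hρ]
    apply max_lt
    · rw [abs_lt]; constructor <;> nlinarith
    · rw [abs_lt]; constructor <;> nlinarith
  refine ⟨hρ1, ?_⟩
  have hC0 := GTTaux.C0_nonneg P
  have hC1 := GTTaux.C1_nonneg P
  have hC2 := GTTaux.C2_nonneg P
  have hC3 := GTTaux.C3_nonneg P
  set Δ : ℝ := h * (2 * P.C0 / P.m) with hΔ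
  set B : ℝ := h * (2 * P.C0 / P.m) +
      h ^ 2 / 2 * (P.C0 ^ 2 * P.C1 / P.m ^ 3 + 2 * P.C0 * P.C2 / P.m ^ 2 + P.C3 / P.m) with hB
  have hΔ0 : 0 ≤ Δ := by rw [hΔ]; positivity
  have hΔB : Δ ≤ B := by
    rw [hΔ, hB]
    have : (0:ℝ) ≤ h ^ 2 / 2 * (P.C0 ^ 2 * P.C1 / P.m ^ 3 + 2 * P.C0 * P.C2 / P.m ^ 2 + P.C3 / P.m) := by
      positivity
    linarith
  set q : ℝ := ρ ^ τ with hq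
  have hq0 : 0 ≤ q := by rw [hq]; positivity
  have hq1 : q < 1 := by
    rw [hq]; exact pow_lt_one₀ hρ0 hρ1 (by omega)
  have hq1' : (0:ℝ) < 1 - q := by linarith
  -- prediction error bound
  have hpred : ∀ k : ℕ,
      ‖(x k - h • P.hessInv (x k) ((k:ℝ)*h) (P.dtgrad (x k) ((k:ℝ)*h))) -
        P.xstar (((k:ℝ)+1)*h)‖ ≤ ‖x k - P.xstar ((k:ℝ)*h)‖ + Δ := by
    intro k
    set tk : ℝ := (k:ℝ) * h with htk
    set tk1 : ℝ := ((k:ℝ)+1) * h with htk1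
    set w : EuclideanSpace ℝ (Fin n) := h • P.hessInv (x k) tk (P.dtgrad (x k) tk) with hw
    have t1 : ‖w‖ ≤ h * (P.C0 / P.m) := by
      rw [hw, norm_smul, Real.norm_eq_abs, abs_of_pos hh]
      apply mul_le_mul_of_nonneg_left _ hh.le
      calc ‖P.hessInv (x k) tk (P.dtgrad (x k) tk)‖ ≤ ‖P.dtgrad (x k) tk‖ / P.m :=
            GTTaux.hessInv_bound P _ _ _
        _ ≤ P.C0 / P.m := div_le_div_of_nonneg_right (P.dtgrad_bound _ _) hm.le
    have t2 : ‖P.xstar tk - P.xstar tk1‖ ≤ P.C0 / P.m * h := by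
      have := GTTaux.xstar_lip P tk1 tk
      have he : tk - tk1 = -h := by rw [htk, htk1]; ring
      rwa [he, Real.norm_eq_abs, abs_neg, abs_of_pos hh] at this
    have hdecomp : (x k - w) - P.xstar tk1 =
        (x k - P.xstar tk) + (-w) + (P.xstar tk - P.xstar tk1) := by abel
    calc ‖(x k - w) - P.xstar tk1‖
        = ‖(x k - P.xstar tk) + (-w) + (P.xstar tk - P.xstar tk1)‖ := by rw [hdecomp]
      _ ≤ ‖x k - P.xstar tk‖ + ‖-w‖ + ‖P.xstar tk - P.xstar tk1‖ := norm_add₃_le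
      _ ≤ ‖x k - P.xstar tk‖ + h * (P.C0 / P.m) + P.C0 / P.m * h := by
          rw [norm_neg]
          exact add_le_add (add_le_add le_rfl t1) t2
      _ = ‖x k - P.xstar tk‖ + Δ := by rw [hΔ]; ring
  -- the recursion
  have hstep : ∀ k : ℕ, ‖x (k+1) - P.xstar (((k:ℝ)+1)*h)‖ ≤
      q * (‖x k - P.xstar ((k:ℝ)*h)‖ + Δ) := by
    intro k
    rw [hrec k, hq]
    exact le_trans (GTTaux.iter_contract P γ ρ hρ (((k:ℝ)+1)*h) τ _)
      (mul_le_mul_of_nonneg_left (hpred k) (by positivity))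
  intro k
  induction k with
  | zero =>
    simp only [Nat.cast_zero, zero_mul, mul_zero, pow_zero, one_mul]
    simp
  | succ k ih =>
    have hcast : (((k+1:ℕ)):ℝ) = (k:ℝ) + 1 := by push_cast; ring
    rw [hcast]
    have hpow : ∀ j : ℕ, ρ ^ (τ * j) = q ^ j := by
      intro j; rw [hq, ← pow_mul]
    rw [hpow (k+1)]
    rw [hpow k] at ih
    have step := hstep k
    have e0 : (0:ℝ) ≤ ‖x 0 - P.xstar 0‖ := norm_nonneg _
    calc ‖x (k+1) - P.xstar (((k:ℝ)+1)*h)‖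
        ≤ q * (‖x k - P.xstar ((k:ℝ)*h)‖ + Δ) := step
      _ ≤ q * ((q ^ k * ‖x 0 - P.xstar 0‖ + q * B * ((1 - q ^ k) / (1 - q))) + B) := by
          apply mul_le_mul_of_nonneg_left _ hq0
          exact add_le_add ih hΔB
      _ = q ^ (k+1) * ‖x 0 - P.xstar 0‖ + q * B * ((q * (1 - q ^ k) + (1 - q)) / (1 - q)) := by
          field_simp
          ring
      _ = q ^ (k+1) * ‖x 0 - P.xstar 0‖ + q * B * ((1 - q ^ (k+1)) / (1 - q)) := by
          congr 2
          rw [pow_succ]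
          field_simp
          ring
end
end
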